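/- arXiv:1102.2787 — 9 statements merged into one kernel-verified Lean document; each statement's English description precedes it below -/
import Mathlib

section
/- Let A, B, D be real numbers with A ≥ B ≥ D ≥ 0. Then there exist real numbers x, y, z with x ≥ 0, y ≥ 0, z ≥ 0, x + y ≤ A, y + z ≤ B, z + x ≤ D, and x + y + z = min{(1/2)(A + B + D), B + D}. (If A < B + D the point (x,y,z) = (1/2)(A−B+D, A+B−D, −A+B+D) attains the value; otherwise (x,y,z) = (D, B, 0) attains it.) -/
/-- Attainability part of the linear program of Appendix D:
the value min{(1/2)(A+B+D), B+D} is attained by a feasible point. -/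
theorem lp_attained (A B D : ℝ) (hAB : A ≥ B) (hBD : B ≥ D) (hD0 : D ≥ 0) :
    ∃ x y z : ℝ, x ≥ 0 ∧ y ≥ 0 ∧ z ≥ 0 ∧
      x + y ≤ A ∧ y + z ≤ B ∧ z + x ≤ D ∧
      x + y + z = min ((1/2) * (A + B + D)) (B + D) := by
  rcases le_or_gt A (B + D) with h | h
  · refine ⟨(1/2)*(A-B+D), (1/2)*(A+B-D), (1/2)*(-A+B+D), by linarith, by linarith, by linarith, by linarith, by linarith, by linarith, ?_⟩
    rw [min_eq_left (by linarith)]; ring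
  · exact ⟨D, B, 0, by linarith, by linarith, le_refl 0, by linarith, by linarith, by linarith,
      by rw [min_eq_right (by linarith)]; ring⟩
end

section
/- Let a, b, P be nonnegative real numbers, let n be a positive integer, and let p₁,…,pₙ and q₁,…,qₙ be nonnegative real numbers with (1/n)·∑ᵢ pᵢ ≤ P and (1/n)·∑ᵢ qᵢ ≤ P. Then (1/n)·∑ᵢ log₂(1 + (√(a·pᵢ) + √(b·qᵢ))²) ≤ log₂(1 + (√a + √b)²·P). -/
open Finset in
/-- Jensen-inequality step (f) in Appendix C. -/
theorem jensen_step_f (a b P : ℝ) (ha : 0 ≤ a) (hb : 0 ≤ b) (hP : 0 ≤ P)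
    (n : ℕ) (hn : 0 < n) (p q : Fin n → ℝ)
    (hp : ∀ i, 0 ≤ p i) (hq : ∀ i, 0 ≤ q i)
    (hpP : (1 / (n : ℝ)) * ∑ i, p i ≤ P)
    (hqP : (1 / (n : ℝ)) * ∑ i, q i ≤ P) :
    (1 / (n : ℝ)) * ∑ i, Real.logb 2 (1 + (Real.sqrt (a * p i) + Real.sqrt (b * q i))^2)
      ≤ Real.logb 2 (1 + (Real.sqrt a + Real.sqrt b)^2 * P) := by
  have hnpos : (0:ℝ) < n := Nat.cast_pos.mpr hn
  set f : Fin n → ℝ := fun i => 1 + (Real.sqrt (a * p i) + Real.sqrt (b * q i))^2 with hf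
  have hf1 : ∀ i, 1 ≤ f i := fun i => le_add_of_nonneg_right (sq_nonneg _)
  have hfpos : ∀ i, 0 < f i := fun i => lt_of_lt_of_le one_pos (hf1 i)
  -- pointwise bound on the squared term
  have hpt : ∀ i, (Real.sqrt (a * p i) + Real.sqrt (b * q i))^2
      ≤ a * p i + b * q i + Real.sqrt (a*b) * (p i + q i) := by
    intro i
    have h1 : Real.sqrt (a * p i) ^ 2 = a * p i := Real.sq_sqrt (mul_nonneg ha (hp i))
    have h2 : Real.sqrt (b * q i) ^ 2 = b * q i := Real.sq_sqrt (mul_nonneg hb (hq i))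
    have h3 : Real.sqrt (a * p i) * Real.sqrt (b * q i)
        = Real.sqrt (a*b) * Real.sqrt (p i * q i) := by
      rw [← Real.sqrt_mul (mul_nonneg ha (hp i)), ← Real.sqrt_mul (mul_nonneg ha hb)]
      ring_nf
    have h4 : 2 * Real.sqrt (p i * q i) ≤ p i + q i := by
      nlinarith [sq_nonneg (Real.sqrt (p i) - Real.sqrt (q i)),
        Real.sq_sqrt (hp i), Real.sq_sqrt (hq i),
        Real.sqrt_mul (hp i) (q i), Real.sqrt_nonneg (p i), Real.sqrt_nonneg (q i)]
    nlinarith [Real.sqrt_nonneg (a*b), add_sq (Real.sqrt (a * p i)) (Real.sqrt (b * q i))]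
  have hsq : (Real.sqrt a + Real.sqrt b)^2 = a + b + 2 * Real.sqrt (a*b) := by
    have := Real.sq_sqrt ha
    have := Real.sq_sqrt hb
    have := Real.sqrt_mul ha b
    nlinarith [Real.sqrt_nonneg a, Real.sqrt_nonneg b]
  have hpsum : ∑ i, p i ≤ n * P := by
    rw [one_div, inv_mul_le_iff₀ hnpos] at hpP; linarith
  have hqsum : ∑ i, q i ≤ n * P := by
    rw [one_div, inv_mul_le_iff₀ hnpos] at hqP; linarith
  -- sum bound
  have hsum : ∑ i, f i ≤ n * (1 + (Real.sqrt a + Real.sqrt b)^2 * P) := by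
    calc ∑ i, f i ≤ ∑ i, (1 + (a * p i + b * q i + Real.sqrt (a*b) * (p i + q i))) :=
          Finset.sum_le_sum (fun i _ => by have := hpt i; simp only [hf]; linarith)
      _ = n + a * ∑ i, p i + b * ∑ i, q i
          + Real.sqrt (a*b) * (∑ i, p i + ∑ i, q i) := by
          simp [Finset.sum_add_distrib, Finset.mul_sum, mul_add]; ring
      _ ≤ n + a * (n*P) + b * (n*P) + Real.sqrt (a*b) * (n*P + n*P) := by
          have hab := Real.sqrt_nonneg (a*b)
          gcongr
      _ = n * (1 + (Real.sqrt a + Real.sqrt b)^2 * P) := by rw [hsq]; ring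
  -- AM-GM Jensen step for log
  have hgm : ∏ i, f i ^ ((1:ℝ)/n) ≤ ∑ i : Fin n, (1/(n:ℝ)) * f i :=
    Real.geom_mean_le_arith_mean_weighted Finset.univ (fun _ => 1/(n:ℝ)) f
      (fun i _ => by positivity)
      (by simp [Finset.sum_const, Finset.card_univ]; field_simp)
      (fun i _ => (hfpos i).le)
  have hgmpos : 0 < ∏ i, f i ^ ((1:ℝ)/n) :=
    Finset.prod_pos (fun i _ => Real.rpow_pos_of_pos (hfpos i) _)
  have hlog : (1/(n:ℝ)) * ∑ i, Real.log (f i) ≤ Real.log (1 + (Real.sqrt a + Real.sqrt b)^2 * P) := by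
    have h1 : (1/(n:ℝ)) * ∑ i, Real.log (f i) = Real.log (∏ i, f i ^ ((1:ℝ)/n)) := by
      rw [Real.log_prod (fun i _ => (Real.rpow_pos_of_pos (hfpos i) _).ne')]
      rw [Finset.mul_sum]
      exact Finset.sum_congr rfl (fun i _ => by
        rw [Real.log_rpow (hfpos i)])
    rw [h1]
    have h2 : (∑ i : Fin n, (1/(n:ℝ)) * f i) ≤ 1 + (Real.sqrt a + Real.sqrt b)^2 * P := by
      rw [← Finset.mul_sum]
      rw [one_div, inv_mul_le_iff₀ hnpos]
      linarith [hsum]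
    have h3 : Real.log (∏ i, f i ^ ((1:ℝ)/n)) ≤ Real.log (∑ i : Fin n, (1/(n:ℝ)) * f i) :=
      Real.log_le_log hgmpos hgm
    refine h3.trans (Real.log_le_log ?_ h2)
    calc (0:ℝ) < ∏ i, f i ^ ((1:ℝ)/n) := hgmpos
      _ ≤ _ := hgm
  -- convert to logb
  have hlog2 : (0:ℝ) < Real.log 2 := Real.log_pos one_lt_two
  simp only [Real.logb, hf] at *
  rw [← Finset.sum_div, mul_div_assoc']
  exact (div_le_div_iff_of_pos_right hlog2).mpr hlog
end

section
/- Let h₁, h₂, h₃ be real numbers with h₁² ≥ h₂² ≥ h₃² and let P ≥ 0. Then 2·C(h₂²·P) + C(h₃²·P) ≤ 3 · min{ C((h₁² + h₂² + h₃²)·P), C(h₂²·P) + C(h₃²·P), (1/2)·(C(h₁²·P) + C(h₂²·P) + C(h₃²·P)) }. -/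
/-- The Gaussian capacity function C(x) = (1/2)·log₂(1 + x). -/
noncomputable def Cap (x : ℝ) : ℝ := (1/2) * Real.logb 2 (1 + x)

lemma Cap_nonneg {x : ℝ} (hx : 0 ≤ x) : 0 ≤ Cap x := by
  unfold Cap
  have : (0:ℝ) ≤ Real.logb 2 (1 + x) := by
    apply Real.logb_nonneg one_lt_two; linarith
  linarith

lemma Cap_mono {x y : ℝ} (hx : 0 ≤ x) (hxy : x ≤ y) : Cap x ≤ Cap y := by
  unfold Cap
  gcongr <;> linarith

/-- Multiplicative gap bound Γ_m ≤ 3. -/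
theorem multiplicative_gap (h₁ h₂ h₃ P : ℝ)
    (h12 : h₁^2 ≥ h₂^2) (h23 : h₂^2 ≥ h₃^2) (hP : P ≥ 0) :
    2 * Cap (h₂^2 * P) + Cap (h₃^2 * P)
      ≤ 3 * min (Cap ((h₁^2 + h₂^2 + h₃^2) * P))
          (min (Cap (h₂^2 * P) + Cap (h₃^2 * P))
            ((1/2) * (Cap (h₁^2 * P) + Cap (h₂^2 * P) + Cap (h₃^2 * P)))) := by
  have h2P : (0:ℝ) ≤ h₂^2 * P := mul_nonneg (sq_nonneg _) hP
  have h3P : (0:ℝ) ≤ h₃^2 * P := mul_nonneg (sq_nonneg _) hP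
  have c2 : 0 ≤ Cap (h₂^2 * P) := Cap_nonneg h2P
  have c3 : 0 ≤ Cap (h₃^2 * P) := Cap_nonneg h3P
  have h1n : (0:ℝ) ≤ h₁^2 := sq_nonneg _
  have h3n : (0:ℝ) ≤ h₃^2 := sq_nonneg _
  have m12 : Cap (h₂^2 * P) ≤ Cap (h₁^2 * P) :=
    Cap_mono h2P (mul_le_mul_of_nonneg_right h12 hP)
  have m2s : Cap (h₂^2 * P) ≤ Cap ((h₁^2 + h₂^2 + h₃^2) * P) :=
    Cap_mono h2P (mul_le_mul_of_nonneg_right (by nlinarith) hP)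
  have m3s : Cap (h₃^2 * P) ≤ Cap ((h₁^2 + h₂^2 + h₃^2) * P) :=
    Cap_mono h3P (mul_le_mul_of_nonneg_right (by nlinarith) hP)
  simp only [mul_min_of_nonneg _ _ (by norm_num : (0:ℝ) ≤ 3), le_min_iff]
  refine ⟨by linarith, by linarith, by linarith⟩
end

section
/- Let h₁, h₂, h₃ be real numbers with h₁² ≥ h₂² ≥ h₃² and let P ≥ 0 satisfy h₂²·P ≤ 1/2. Then (2·C(h₂²·P) + C(h₃²·P)) − min{ C((h₁² + h₂² + h₃²)·P), C(h₂²·P) + C(h₃²·P), (1/2)·(C(h₁²·P) + C(h₂²·P) + C(h₃²·P)) } ≤ log₂(3/2). -/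
/-- Additive gap bound Γ_{a1} ≤ log₂(3/2) for the case h₂²P ≤ 1/2. -/
theorem additive_gap_low_power (h₁ h₂ h₃ P : ℝ)
    (h12 : h₁^2 ≥ h₂^2) (h23 : h₂^2 ≥ h₃^2) (hP : P ≥ 0)
    (hlow : h₂^2 * P ≤ 1/2) :
    (2 * Cap (h₂^2 * P) + Cap (h₃^2 * P))
      - min (Cap ((h₁^2 + h₂^2 + h₃^2) * P))
          (min (Cap (h₂^2 * P) + Cap (h₃^2 * P))
            ((1/2) * (Cap (h₁^2 * P) + Cap (h₂^2 * P) + Cap (h₃^2 * P))))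
      ≤ Real.logb 2 (3/2) := by
  set x := h₂^2 * P with hxdef
  set y := h₃^2 * P with hydef
  set z := h₁^2 * P with hzdef
  set s := (h₁^2 + h₂^2 + h₃^2) * P with hsdef
  have hx0 : 0 ≤ x := mul_nonneg (sq_nonneg _) hP
  have hy0 : 0 ≤ y := mul_nonneg (sq_nonneg _) hP
  have hyx : y ≤ x := mul_le_mul_of_nonneg_right h23 hP
  have hxz : x ≤ z := mul_le_mul_of_nonneg_right h12 hP
  have hs : 2*x + y ≤ s := by
    simp only [hxdef, hydef, hsdef]; nlinarith
  -- basic logb facts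
  have L := Real.logb (2:ℝ)
  have px : (0:ℝ) < 1 + x := by linarith
  have py : (0:ℝ) < 1 + y := by linarith
  have pz : (0:ℝ) < 1 + z := by linarith
  have ps : (0:ℝ) < 1 + s := by nlinarith
  have lyx : Real.logb 2 (1+y) ≤ Real.logb 2 (1+x) :=
    (Real.logb_le_logb one_lt_two py px).mpr (by linarith)
  have lxz : Real.logb 2 (1+x) ≤ Real.logb 2 (1+z) :=
    (Real.logb_le_logb one_lt_two px pz).mpr (by linarith)
  have lx32 : Real.logb 2 (1+x) ≤ Real.logb 2 (3/2) :=
    (Real.logb_le_logb one_lt_two px (by norm_num)).mpr (by linarith)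
  have ly0 : 0 ≤ Real.logb 2 (1+y) := Real.logb_nonneg one_lt_two (by linarith)
  have l320 : 0 ≤ Real.logb 2 (3/2) := Real.logb_nonneg one_lt_two (by norm_num)
  -- the product inequality for term 1
  have hprod : (1+x)^2 * (1+y) ≤ (3/2)^2 * (1+s) := by nlinarith
  have hterm1' : Real.logb 2 ((1+x)^2 * (1+y)) ≤ Real.logb 2 ((3/2)^2 * (1+s)) :=
    (Real.logb_le_logb one_lt_two (by positivity) (by positivity)).mpr hprod
  rw [Real.logb_mul (by positivity) (by positivity),
      Real.logb_mul (by positivity) (by positivity),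
      Real.logb_pow, Real.logb_pow] at hterm1'
  -- three bounds
  have t1 : (2 * Cap x + Cap y) - Cap s ≤ Real.logb 2 (3/2) := by
    simp only [Cap]; push_cast at hterm1'; linarith
  have t2 : (2 * Cap x + Cap y) - (Cap x + Cap y) ≤ Real.logb 2 (3/2) := by
    simp only [Cap]; linarith
  have t3 : (2 * Cap x + Cap y) - (1/2) * (Cap z + Cap x + Cap y) ≤ Real.logb 2 (3/2) := by
    simp only [Cap]; linarith
  have := le_min (by linarith : (2 * Cap x + Cap y) - Real.logb 2 (3/2) ≤ Cap s)
    (le_min (by linarith : (2 * Cap x + Cap y) - Real.logb 2 (3/2) ≤ Cap x + Cap y)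
      (by linarith : (2 * Cap x + Cap y) - Real.logb 2 (3/2) ≤ (1/2) * (Cap z + Cap x + Cap y)))
  linarith
end

section
/- Let h₁, h₂, h₃ be real numbers with h₁² ≥ h₂² ≥ h₃² and let P > 0 satisfy h₂²·P > 1/2. Then [ C((h₂² + h₃²)·P) + C(min{(h₁² + h₃²)·P, (|h₂| + |h₃|)²·P}) ] − 2·C(h₂²·P − 1/2) ≤ log₂(2 + 1/(h₂²·P)) + 1/2. -/
/-- Additive gap bound Γ_{a2} ≤ log₂(2 + 1/(h₂²P)) + 1/2 for h₂²P > 1/2. -/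
theorem additive_gap_high_power (h₁ h₂ h₃ P : ℝ)
    (h12 : h₁^2 ≥ h₂^2) (h23 : h₂^2 ≥ h₃^2) (hP : P > 0)
    (hhigh : h₂^2 * P > 1/2) :
    (Cap ((h₂^2 + h₃^2) * P)
        + Cap (min ((h₁^2 + h₃^2) * P) ((|h₂| + |h₃|)^2 * P)))
      - 2 * Cap (h₂^2 * P - 1/2)
      ≤ Real.logb 2 (2 + 1 / (h₂^2 * P)) + 1/2 := by
  set x : ℝ := h₂^2 * P with hxdef
  have hx : x > 1/2 := hhigh
  have hx0 : x > 0 := by linarith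
  have h3P : h₃^2 * P ≤ x := by
    rw [hxdef]; nlinarith [sq_nonneg h₃]
  have h3nn : 0 ≤ h₃^2 * P := by positivity
  have hb2 : (1:ℝ) < 2 := one_lt_two
  -- bound first Cap
  have A : Cap ((h₂^2 + h₃^2) * P) ≤ (1/2) * Real.logb 2 (1 + 2*x) := by
    unfold Cap
    have hpos : (0:ℝ) < 1 + (h₂^2 + h₃^2) * P := by positivity
    have hle : 1 + (h₂^2 + h₃^2) * P ≤ 1 + 2*x := by
      have : h₂^2 * P ≤ x := le_of_eq hxdef.symm
      nlinarith
    have := Real.logb_le_logb_of_le hb2 hpos hle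
    linarith
  -- bound second Cap
  have hs : (|h₂| + |h₃|)^2 ≤ 4 * h₂^2 := by
    have e2 : |h₂|^2 = h₂^2 := sq_abs h₂
    have e3 : |h₃|^2 = h₃^2 := sq_abs h₃
    nlinarith [sq_nonneg (|h₂| - |h₃|)]
  have hsq : (|h₂| + |h₃|)^2 * P ≤ 4*x := by
    have := mul_le_mul_of_nonneg_right hs hP.le
    rw [hxdef]; linarith
  have B : Cap (min ((h₁^2 + h₃^2) * P) ((|h₂| + |h₃|)^2 * P))
      ≤ (1/2) * Real.logb 2 (1 + 4*x) := by
    unfold Cap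
    have hmin : min ((h₁^2 + h₃^2) * P) ((|h₂| + |h₃|)^2 * P) ≤ 4*x :=
      le_trans (min_le_right _ _) hsq
    have hminnn : 0 ≤ min ((h₁^2 + h₃^2) * P) ((|h₂| + |h₃|)^2 * P) := by
      apply le_min <;> positivity
    have hpos : (0:ℝ) < 1 + min ((h₁^2 + h₃^2) * P) ((|h₂| + |h₃|)^2 * P) := by linarith
    have hle2 : 1 + min ((h₁^2 + h₃^2) * P) ((|h₂| + |h₃|)^2 * P) ≤ 1 + 4*x := by linarith
    have := Real.logb_le_logb_of_le hb2 hpos hle2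
    linarith
  -- rewrite third Cap
  have C : 2 * Cap (x - 1/2) = Real.logb 2 (x + 1/2) := by
    unfold Cap; ring_nf
  rw [C]
  have key : (1/2) * Real.logb 2 (1 + 2*x) + (1/2) * Real.logb 2 (1 + 4*x)
      - Real.logb 2 (x + 1/2) ≤ Real.logb 2 (2 + 1/x) + 1/2 := by
    have p1 : (0:ℝ) < 1 + 2*x := by linarith
    have p2 : (0:ℝ) < 1 + 4*x := by linarith
    have p3 : (0:ℝ) < x + 1/2 := by linarith
    have p4 : (0:ℝ) < 2 + 1/x := by positivity
    have lhs_eq : (1/2) * Real.logb 2 (1 + 2*x) + (1/2) * Real.logb 2 (1 + 4*x)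
        - Real.logb 2 (x + 1/2)
        = (1/2) * Real.logb 2 ((1+2*x)*(1+4*x)/(x+1/2)^2) := by
      rw [Real.logb_div (by positivity) (by positivity),
        Real.logb_mul (by positivity) (by positivity),
        Real.logb_pow]
      push_cast
      ring
    have rhs_eq : Real.logb 2 (2 + 1/x) + 1/2
        = (1/2) * Real.logb 2 (2 * (2+1/x)^2) := by
      rw [Real.logb_mul (by norm_num) (by positivity), Real.logb_pow,
        show Real.logb 2 2 = 1 from Real.logb_self_eq_one hb2]
      push_cast
      ring
    rw [lhs_eq, rhs_eq]
    have hnum : (1+2*x)*(1+4*x)/(x+1/2)^2 ≤ 2 * (2+1/x)^2 := by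
      rw [div_le_iff₀ (by positivity)]
      have hinv : x * (1/x) = 1 := by field_simp
      nlinarith [sq_nonneg x, sq_nonneg (1/x), mul_pos hx0 hx0]
    have := Real.logb_le_logb_of_le hb2 (by positivity) hnum
    linarith
  linarith
end

section
/- Let h₂, h₃ be real numbers with h₂² ≥ h₃² and let P > 0 satisfy h₂²·P > 1/2. Then 2·C((h₂² + h₃²)·P) − 2·C(h₂²·P − 1/2) ≤ log₂(2 + 1/(h₂²·P)), and in particular 2·C((h₂² + h₃²)·P) − 2·C(h₂²·P − 1/2) ≤ 2. -/
/-- Gap bound Γ^r_{a2} ≤ log₂(2 + 1/(h₂²P)) ≤ 2 for the restricted Y-channel. -/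
theorem restricted_gap (h₂ h₃ P : ℝ)
    (h23 : h₂^2 ≥ h₃^2) (hP : P > 0) (hhigh : h₂^2 * P > 1/2) :
    2 * Cap ((h₂^2 + h₃^2) * P) - 2 * Cap (h₂^2 * P - 1/2)
        ≤ Real.logb 2 (2 + 1 / (h₂^2 * P)) ∧
      2 * Cap ((h₂^2 + h₃^2) * P) - 2 * Cap (h₂^2 * P - 1/2) ≤ 2 := by
  set a : ℝ := h₂^2 * P with ha
  have hb0 : 0 ≤ h₃^2 * P := by positivity
  have hba : h₃^2 * P ≤ a := by
    apply mul_le_mul_of_nonneg_right h23 hP.le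
  have hX : (0:ℝ) < 1 + (h₂^2 + h₃^2) * P := by nlinarith
  have hY : (0:ℝ) < 1 + (a - 1/2) := by nlinarith
  have hZ : (0:ℝ) < 2 + 1 / a := by positivity
  have key : 1 + (h₂^2 + h₃^2) * P ≤ (2 + 1/a) * (1 + (a - 1/2)) := by
    have h1a : 1/a ≤ 2 := by
      rw [div_le_iff₀ (by linarith)]; linarith
    have hane : a ≠ 0 := by positivity
    have hinv : a * (1/a) = 1 := by field_simp
    nlinarith [mul_nonneg (le_of_lt (by positivity : (0:ℝ) < 1/a)) (by linarith : (0:ℝ) ≤ a - 1/2)]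
  have main : 2 * Cap ((h₂^2 + h₃^2) * P) - 2 * Cap (a - 1/2)
      ≤ Real.logb 2 (2 + 1 / a) := by
    unfold Cap
    have e1 : 2 * (1/2 * Real.logb 2 (1 + (h₂^2 + h₃^2) * P)) -
        2 * (1/2 * Real.logb 2 (1 + (a - 1/2)))
        = Real.logb 2 ((1 + (h₂^2 + h₃^2) * P) / (1 + (a - 1/2))) := by
      rw [Real.logb_div hX.ne' hY.ne']; ring
    rw [e1]
    apply Real.logb_le_logb_of_le (by norm_num)
    · positivity
    · rw [div_le_iff₀ hY]; linarith [key]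
  refine ⟨main, main.trans ?_⟩
  have h1a : 1/a ≤ 2 := by
    rw [div_le_iff₀ (by linarith)]; linarith
  calc Real.logb 2 (2 + 1/a) ≤ Real.logb 2 4 := by
        apply Real.logb_le_logb_of_le (by norm_num) hZ; linarith
    _ = 2 := by
        rw [show (4:ℝ) = 2^(2:ℕ) by norm_num, Real.logb_pow]
        simp [Real.logb_self_eq_one]
end

section
/- Let h₁, h₂, h₃ be real numbers with h₁² ≥ h₂² ≥ h₃² and h₂ ≠ 0. Then limsup as P → ∞ of [ C((h₂² + h₃²)·P) + C(min{(h₁² + h₃²)·P, (|h₂| + |h₃|)²·P}) − 2·C(h₂²·P − 1/2) ] is at most 3/2. -/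
open Filter in
/-- The general Y-channel gap approaches at most 3/2 bits as P → ∞. -/
theorem gap_limsup_general (h₁ h₂ h₃ : ℝ)
    (h12 : h₁^2 ≥ h₂^2) (h23 : h₂^2 ≥ h₃^2) (h₂ne : h₂ ≠ 0) :
    limsup (fun P : ℝ =>
        (Cap ((h₂^2 + h₃^2) * P)
            + Cap (min ((h₁^2 + h₃^2) * P) ((|h₂| + |h₃|)^2 * P)))
          - 2 * Cap (h₂^2 * P - 1/2)) atTop ≤ 3/2 := by
  have hm : (0:ℝ) < h₂^2 := by positivity
  have hev : ∀ᶠ P : ℝ in atTop,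
      (Cap ((h₂^2 + h₃^2) * P)
            + Cap (min ((h₁^2 + h₃^2) * P) ((|h₂| + |h₃|)^2 * P)))
          - 2 * Cap (h₂^2 * P - 1/2) ≤ 3/2 := by
    filter_upwards [eventually_ge_atTop (0:ℝ)] with P hP
    set m := h₂^2 with hmdef
    have hmP : 0 ≤ m * P := by positivity
    -- abbreviations
    set x := 1 + (h₂^2 + h₃^2) * P with hx
    set y := 1 + min ((h₁^2 + h₃^2) * P) ((|h₂| + |h₃|)^2 * P) with hy
    set z := 1 + (h₂^2 * P - 1/2) with hz
    have hB2 : (|h₂| + |h₃|)^2 ≤ 4 * m := by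
      have h2 : |h₂|^2 = h₂^2 := sq_abs h₂
      have h3 : |h₃|^2 = h₃^2 := sq_abs h₃
      nlinarith [sq_nonneg (|h₂| - |h₃|), abs_nonneg h₂, abs_nonneg h₃]
    have hxpos : 0 < x := by
      have : 0 ≤ (h₂^2 + h₃^2) * P := by positivity
      simp only [hx]; linarith
    have hypos : 0 < y := by
      have h1 : 0 ≤ (h₁^2 + h₃^2) * P := by positivity
      have h2 : 0 ≤ (|h₂| + |h₃|)^2 * P := by positivity
      have := le_min h1 h2
      simp only [hy]; linarith
    have hzpos : 0 < z := by simp only [hz]; nlinarith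
    have hxle : x ≤ 1 + 2 * m * P := by
      simp only [hx, hmdef]; nlinarith
    have hyle : y ≤ 1 + 4 * m * P := by
      have := min_le_right ((h₁^2 + h₃^2) * P) ((|h₂| + |h₃|)^2 * P)
      have h2 : (|h₂| + |h₃|)^2 * P ≤ 4 * m * P := by nlinarith
      simp only [hy]; linarith
    -- key product inequality
    have hprod : x * y ≤ 8 * z^2 := by
      have h1 : x * y ≤ (1 + 2*m*P) * (1 + 4*m*P) := by
        have := mul_le_mul hxle hyle hypos.le (by nlinarith)
        linarith
      have h2 : (1 + 2*m*P) * (1 + 4*m*P) ≤ 8 * z^2 := by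
        simp only [hz, hmdef]; nlinarith
      linarith
    have hlog : Real.logb 2 (x * y) ≤ Real.logb 2 (8 * z^2) := by
      exact Real.logb_le_logb_of_le one_lt_two (by positivity) hprod
    have hsum : Real.logb 2 x + Real.logb 2 y ≤ 3 + 2 * Real.logb 2 z := by
      have e1 : Real.logb 2 (x * y) = Real.logb 2 x + Real.logb 2 y :=
        Real.logb_mul hxpos.ne' hypos.ne'
      have e2 : Real.logb 2 (8 * z^2) = 3 + 2 * Real.logb 2 z := by
        rw [Real.logb_mul (by norm_num) (by positivity),
          show (8:ℝ) = 2^(3:ℕ) by norm_num, Real.logb_pow, Real.logb_pow,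
          Real.logb_self_eq_one one_lt_two]
        push_cast; ring
      rw [e1] at hlog; rw [e2] at hlog; linarith
    simp only [Cap, hx.symm, hy.symm, hz.symm]
    linarith
  have hev0 : ∀ᶠ P : ℝ in atTop,
      (0:ℝ) ≤ (Cap ((h₂^2 + h₃^2) * P)
            + Cap (min ((h₁^2 + h₃^2) * P) ((|h₂| + |h₃|)^2 * P)))
          - 2 * Cap (h₂^2 * P - 1/2) := by
    filter_upwards [eventually_ge_atTop (0:ℝ)] with P hP
    have hzpos : (0:ℝ) < 1 + (h₂^2 * P - 1/2) := by
      linarith [mul_nonneg (sq_nonneg h₂) hP]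
    have hB2 : h₂^2 ≤ (|h₂| + |h₃|)^2 := by
      have h2 : |h₂|^2 = h₂^2 := sq_abs h₂
      nlinarith [abs_nonneg h₂, abs_nonneg h₃]
    have l1 : Real.logb 2 (1 + (h₂^2 * P - 1/2))
        ≤ Real.logb 2 (1 + (h₂^2 + h₃^2) * P) := by
      apply Real.logb_le_logb_of_le one_lt_two hzpos
      have := mul_nonneg (sq_nonneg h₃) hP
      nlinarith
    have l2 : Real.logb 2 (1 + (h₂^2 * P - 1/2))
        ≤ Real.logb 2 (1 + min ((h₁^2 + h₃^2) * P) ((|h₂| + |h₃|)^2 * P)) := by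
      apply Real.logb_le_logb_of_le one_lt_two hzpos
      have h1 : h₂^2 * P ≤ (h₁^2 + h₃^2) * P := by
        have : (0:ℝ) ≤ (h₁^2 - h₂^2 + h₃^2) * P := by
          apply mul_nonneg _ hP; nlinarith [sq_nonneg h₃]
        nlinarith
      have h2 : h₂^2 * P ≤ (|h₂| + |h₃|)^2 * P := by
        have : (0:ℝ) ≤ ((|h₂| + |h₃|)^2 - h₂^2) * P :=
          mul_nonneg (by linarith) hP
        nlinarith
      have h3 := le_min h1 h2
      linarith
    simp only [Cap]
    linarith
  exact Filter.limsup_le_of_le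
    (Filter.IsBoundedUnder.isCoboundedUnder_le ⟨0, hev0⟩) hev
end

section
/- Let h₂, h₃ be real numbers with h₂² ≥ h₃² and h₂ ≠ 0. Then limsup as P → ∞ of [ 2·C((h₂² + h₃²)·P) − 2·C(h₂²·P − 1/2) ] is at most 1. -/
open Filter in
/-- The restricted Y-channel gap approaches at most 1 bit as P → ∞. -/
theorem gap_limsup_restricted (h₂ h₃ : ℝ)
    (h23 : h₂^2 ≥ h₃^2) (h₂ne : h₂ ≠ 0) :
    limsup (fun P : ℝ =>
        2 * Cap ((h₂^2 + h₃^2) * P) - 2 * Cap (h₂^2 * P - 1/2)) atTop ≤ 1 := by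
  have h2pos : (0:ℝ) < h₂^2 := by positivity
  have hev : ∀ᶠ P in atTop, (fun P : ℝ =>
      2 * Cap ((h₂^2 + h₃^2) * P) - 2 * Cap (h₂^2 * P - 1/2)) P ≤ 1 := by
    filter_upwards [eventually_ge_atTop (1/h₂^2), eventually_ge_atTop (1:ℝ)] with P hP1 hP2
    have hb1 : 1 ≤ h₂^2 * P := (div_le_iff₀ h2pos).mp hP1 |>.trans_eq (mul_comm P _)
    have hd : (0:ℝ) < 1 + (h₂^2 * P - 1/2) := by linarith
    have hn : (0:ℝ) < 1 + (h₂^2 + h₃^2) * P := by nlinarith [sq_nonneg h₃]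
    have hc : ∀ x : ℝ, 2 * Cap x = Real.logb 2 (1 + x) := by
      intro x; unfold Cap; ring
    simp only [hc]
    rw [← Real.logb_div hn.ne' hd.ne']
    have hle : (1 + (h₂^2 + h₃^2) * P) / (1 + (h₂^2 * P - 1/2)) ≤ 2 := by
      rw [div_le_iff₀ hd]
      nlinarith [sq_nonneg h₃]
    calc Real.logb 2 ((1 + (h₂^2 + h₃^2) * P) / (1 + (h₂^2 * P - 1/2)))
        ≤ Real.logb 2 2 := Real.logb_le_logb_of_le one_lt_two (by positivity) hle
      _ = 1 := Real.logb_self_eq_one one_lt_two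
  have hge : ∀ᶠ P in atTop, (0:ℝ) ≤ (fun P : ℝ =>
      2 * Cap ((h₂^2 + h₃^2) * P) - 2 * Cap (h₂^2 * P - 1/2)) P := by
    filter_upwards [eventually_ge_atTop (1/h₂^2), eventually_ge_atTop (1:ℝ)] with P hP1 hP2
    have hb1 : 1 ≤ h₂^2 * P := (div_le_iff₀ h2pos).mp hP1 |>.trans_eq (mul_comm P _)
    have hd : (0:ℝ) < 1 + (h₂^2 * P - 1/2) := by linarith
    have hc : ∀ x : ℝ, 2 * Cap x = Real.logb 2 (1 + x) := by
      intro x; unfold Cap; ring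
    simp only [hc]
    have : Real.logb 2 (1 + (h₂^2 * P - 1/2)) ≤ Real.logb 2 (1 + (h₂^2 + h₃^2) * P) :=
      Real.logb_le_logb_of_le one_lt_two hd (by nlinarith [sq_nonneg h₃])
    linarith
  exact limsup_le_of_le (Filter.isCoboundedUnder_le_of_eventually_le atTop hge) hev
end

section
/- Let h₁, h₂, h₃ be real numbers with h₁² ≥ h₂² ≥ h₃² and h₂ ≠ 0. Then the limit as P → ∞ of [ C((h₂² + h₃²)·P) + C(min{(h₁² + h₃²)·P, (|h₂| + |h₃|)²·P}) ] / log₂(P) exists and equals 1. -/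
open Filter in
lemma log_ratio_tendsto (k : ℝ) (hk : 0 < k) :
    Tendsto (fun P : ℝ => Real.log (1 + k * P) / Real.log P) atTop (nhds 1) := by
  have hE : ∀ᶠ P in atTop,
      Real.log (1 + k * P) / Real.log P = 1 + Real.log (k + 1 / P) / Real.log P := by
    filter_upwards [eventually_gt_atTop (1 : ℝ)] with P hP
    have hP0 : (0:ℝ) < P := lt_trans one_pos hP
    have hlogP : Real.log P ≠ 0 := ne_of_gt (Real.log_pos hP)
    have hx : 1 + k * P = P * (k + 1 / P) := by field_simp; ring
    have hpos : 0 < k + 1 / P := by positivity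
    rw [hx, Real.log_mul hP0.ne' hpos.ne', add_div, div_self hlogP]
  have key : Tendsto (fun P : ℝ => Real.log (1 + k * P) / Real.log P) atTop (nhds (1 + 0)) := by
    refine Tendsto.congr' (hE.mono fun _ h => h.symm) (tendsto_const_nhds.add ?_)
    have h1 : Tendsto (fun P : ℝ => k + 1 / P) atTop (nhds k) := by
      simpa using tendsto_const_nhds.add
        (tendsto_inv_atTop_zero.congr (fun x : ℝ => (one_div x).symm))
    have h2 : Tendsto (fun P : ℝ => Real.log (k + 1 / P)) atTop (nhds (Real.log k)) :=
      (Real.continuousAt_log hk.ne').tendsto.comp h1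
    exact Tendsto.div_atTop h2 Real.tendsto_log_atTop
  simpa using key

open Filter in
/-- The genie-aided sum-capacity upper bound has pre-log 1. -/
theorem genie_prelog (h₁ h₂ h₃ : ℝ)
    (h12 : h₁^2 ≥ h₂^2) (h23 : h₂^2 ≥ h₃^2) (h₂ne : h₂ ≠ 0) :
    Tendsto (fun P : ℝ =>
        (Cap ((h₂^2 + h₃^2) * P)
            + Cap (min ((h₁^2 + h₃^2) * P) ((|h₂| + |h₃|)^2 * P))) / Real.logb 2 P)
      atTop (nhds 1) := by
  have h₂sq : 0 < h₂ ^ 2 := by positivity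
  set a : ℝ := h₂ ^ 2 + h₃ ^ 2 with ha
  set m : ℝ := min (h₁ ^ 2 + h₃ ^ 2) ((|h₂| + |h₃|) ^ 2) with hm
  have hapos : 0 < a := by positivity
  have hmpos : 0 < m := by
    apply lt_min
    · nlinarith
    · have : h₂ ^ 2 ≤ (|h₂| + |h₃|) ^ 2 := by
        have := abs_nonneg h₂; have := abs_nonneg h₃
        have h2 : h₂ ^ 2 = |h₂| ^ 2 := (sq_abs h₂).symm
        nlinarith
      linarith
  have hlog2 : Real.log 2 ≠ 0 := by
    exact ne_of_gt (Real.log_pos one_lt_two)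
  have hE : ∀ᶠ P in atTop,
      (Cap ((h₂^2 + h₃^2) * P)
          + Cap (min ((h₁^2 + h₃^2) * P) ((|h₂| + |h₃|)^2 * P))) / Real.logb 2 P
        = (1/2) * (Real.log (1 + a * P) / Real.log P)
          + (1/2) * (Real.log (1 + m * P) / Real.log P) := by
    filter_upwards [eventually_ge_atTop (0 : ℝ)] with P hP
    have hmin : min ((h₁ ^ 2 + h₃ ^ 2) * P) ((|h₂| + |h₃|) ^ 2 * P) = m * P := by
      rw [hm, min_mul_of_nonneg _ _ hP]
    rw [hmin, Cap, Cap, Real.logb, Real.logb, Real.logb]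
    field_simp
    ring_nf
    rw [ha]
    ring_nf
  have h1 := log_ratio_tendsto a hapos
  have h2 := log_ratio_tendsto m hmpos
  have := (h1.const_mul (1/2 : ℝ)).add (h2.const_mul (1/2 : ℝ))
  rw [show (1:ℝ)/2 * 1 + 1/2 * 1 = 1 by norm_num] at this
  exact Tendsto.congr' (hE.mono fun _ h => h.symm) this
end
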